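/- Let C be a generalized Cartan matrix on a finite nonempty set I and let v : I → ℝ be a configuration. Suppose there is a (<-1)-play from v of length r ending at a configuration having no coordinate strictly less than -1. Then every (<-1)-play from v has length s ≤ r, and every (<-1)-play from v of length s can be extended to a (<-1)-play from v of length r ending at that same configuration. -/
import Mathlib


/-- Firing vertex `i`: `v` is replaced by `fun j => v j - C i j * v i`. -/
def fire {I : Type*} (C : I → I → ℤ) (i : I) (v : I → ℝ) : I → ℝ :=
  fun j => v j - (C i j : ℝ) * v i

/-- The configuration resulting from firing the vertices in the list `l` successively. -/
def playResult {I : Type*} (C : I → I → ℤ) : (I → ℝ) → List I → (I → ℝ)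
  | v, [] => v
  | v, i :: l => playResult C (fire C i v) l

/-- `IsPlay C θ v l` : the list `l` is a sequence of successive firings starting at `v`
in which each fired vertex has amplitude strictly less than `θ` at the time it is fired.
With `θ = 0` this is a legal play; with `θ = -1` a `(<-1)`-play. -/
def IsPlay {I : Type*} (C : I → I → ℤ) (θ : ℝ) : (I → ℝ) → List I → Prop
  | _, [] => True
  | v, i :: l => v i < θ ∧ IsPlay C θ (fire C i v) l


section Aux
variable {I : Type*} (C : I → I → ℤ)

theorem playResult_append (l1 l2 : List I) : ∀ v, playResult C v (l1 ++ l2) = playResult C (playResult C v l1) l2 := by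
  induction l1 with
  | nil => intro v; rfl
  | cons i l ih => intro v; simp only [List.cons_append, playResult]; exact ih (fire C i v)

theorem isPlay_append (θ : ℝ) (l1 l2 : List I) : ∀ v, IsPlay C θ v (l1 ++ l2) ↔ IsPlay C θ v l1 ∧ IsPlay C θ (playResult C v l1) l2 := by
  induction l1 with
  | nil => intro v; simp [IsPlay, playResult]
  | cons i l ih => intro v; rw [List.cons_append]; simp only [IsPlay, playResult, ih, and_assoc]

def altL {I : Type*} : ℕ → I → I → List I
  | 0, _, _ => []
  | n+1, i, j => i :: altL n j i

theorem altL_length {I : Type*} : ∀ (n : ℕ) (i j : I), (altL n i j).length = n := by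
  intro n
  induction n with
  | zero => intro i j; rfl
  | succ n ih => intro i j; simp [altL, ih]

def FInv (v : I → ℝ) (i j : I) : Prop :=
  v i < -1 ∧ fire C i v j < -1 ∧ 2 * (fire C i v j) ≤ -(C i j : ℝ) * v i

theorem inv_step (hdiag : ∀ i, C i i = 2) (i j : I)
    (hA : C i j ≤ -1) (hB : C j i ≤ -1) (h4 : 4 ≤ C i j * C j i) (v : I → ℝ)
    (h : FInv C v i j) : FInv C (fire C i v) j i := by
  obtain ⟨h1, h2, h3⟩ := h
  have hAr : (C i j : ℝ) ≤ -1 := by exact_mod_cast hA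
  have hBr : (C j i : ℝ) ≤ -1 := by exact_mod_cast hB
  have h4r : (4:ℝ) ≤ (C i j : ℝ) * (C j i : ℝ) := by exact_mod_cast h4
  simp only [FInv, fire, hdiag] at *
  push_cast at *
  set x := v i
  set Y := v j - (C i j : ℝ) * x with hY
  -- key : (-(C j i)) * Y ≤ 2 * x
  have key : (-(C j i : ℝ)) * Y ≤ 2 * x := by nlinarith
  refine ⟨h2, by nlinarith, by nlinarith⟩

end Aux

theorem inv_play {I : Type*} (C : I → I → ℤ) (hdiag : ∀ i, C i i = 2) :
    ∀ (n : ℕ) (i j : I) (v : I → ℝ),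
      C i j ≤ -1 → C j i ≤ -1 → 4 ≤ C i j * C j i → FInv C v i j →
      IsPlay C (-1) v (altL n i j) := by
  intro n
  induction n with
  | zero => intro i j v _ _ _ _; trivial
  | succ n ih =>
      intro i j v hA hB h4 hinv
      exact ⟨hinv.1, ih j i (fire C i v) hB hA (by linarith [mul_comm (C i j) (C j i)])
        (inv_step C hdiag i j hA hB h4 v hinv)⟩

theorem polygon {I : Type*} (C : I → I → ℤ) (hdiag : ∀ i, C i i = 2)
    (hoff : ∀ i j, i ≠ j → C i j ≤ 0) (hzero : ∀ i j, C i j = 0 ↔ C j i = 0)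
    (v : I → ℝ) (i j : I) (hij : i ≠ j) (hi : v i < -1) (hj : v j < -1) :
    (∃ Li Lj : List I,
       IsPlay C (-1) v (i::Li) ∧ IsPlay C (-1) v (j::Lj) ∧
       (i::Li).length = (j::Lj).length ∧
       playResult C v (i::Li) = playResult C v (j::Lj))
    ∨ (∀ n, ∃ l : List I, l.length = n ∧ IsPlay C (-1) (fire C j v) l) := by
  have hA := hoff i j hij
  have hB := hoff j i hij.symm
  by_cases hA0 : C i j = 0
  · -- A = B = 0, commuting case
    have hB0 : C j i = 0 := (hzero i j).mp hA0
    left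
    refine ⟨[j], [i], ?_, ?_, rfl, ?_⟩
    · refine ⟨hi, ?_, trivial⟩
      simp only [fire, hA0]
      push_cast
      linarith
    · refine ⟨hj, ?_, trivial⟩
      simp only [fire, hB0]
      push_cast
      linarith
    · funext k
      simp only [playResult, fire, hA0, hB0]
      push_cast
      ring
  · have hB0 : ¬ C j i = 0 := fun h => hA0 ((hzero i j).mpr h)
    have hA1 : C i j ≤ -1 := by omega
    have hB1 : C j i ≤ -1 := by omega
    rcases le_or_gt 4 (C i j * C j i) with h4 | h4
    · right
      intro n
      refine ⟨altL n i j, altL_length n i j, ?_⟩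
      apply inv_play C hdiag n i j (fire C j v) hA1 hB1 h4
      have hAr : (C i j : ℝ) ≤ -1 := by exact_mod_cast hA1
      have hBr : (C j i : ℝ) ≤ -1 := by exact_mod_cast hB1
      have h4r : (4:ℝ) ≤ (C i j : ℝ) * (C j i : ℝ) := by exact_mod_cast h4
      constructor
      · simp only [fire]; nlinarith
      constructor
      · simp only [fire, hdiag]; push_cast; nlinarith
      · simp only [fire, hdiag]; push_cast; nlinarith
    · -- finite cases
      have hA3 : -3 ≤ C i j := by nlinarith
      have hB3 : -3 ≤ C j i := by nlinarith
      left
      have hcases : (C i j = -1 ∧ C j i = -1) ∨ (C i j = -1 ∧ C j i = -2) ∨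
          (C i j = -2 ∧ C j i = -1) ∨ (C i j = -1 ∧ C j i = -3) ∨
          (C i j = -3 ∧ C j i = -1) ∨
          ((C i j ≤ -2) ∧ (C j i ≤ -2)) := by omega
      rcases hcases with ⟨e1,e2⟩|⟨e1,e2⟩|⟨e1,e2⟩|⟨e1,e2⟩|⟨e1,e2⟩|⟨e1,e2⟩
      · -- A1xA1 tilde? m=3
        refine ⟨[j,i], [i,j], ?_, ?_, rfl, ?_⟩
        · simp only [IsPlay, fire, hdiag, e1, e2]; push_cast
          refine ⟨hi, by linarith, by linarith, trivial⟩
        · simp only [IsPlay, fire, hdiag, e1, e2]; push_cast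
          refine ⟨hj, by linarith, by linarith, trivial⟩
        · funext k
          simp only [playResult, fire, hdiag, e1, e2]; push_cast; ring
      · -- (-1,-2), m=4
        refine ⟨[j,i,j], [i,j,i], ?_, ?_, rfl, ?_⟩
        · simp only [IsPlay, fire, hdiag, e1, e2]; push_cast
          refine ⟨hi, by linarith, by linarith, by linarith, trivial⟩
        · simp only [IsPlay, fire, hdiag, e1, e2]; push_cast
          refine ⟨hj, by linarith, by linarith, by linarith, trivial⟩
        · funext k
          simp only [playResult, fire, hdiag, e1, e2]; push_cast; ring
      · -- (-2,-1), m=4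
        refine ⟨[j,i,j], [i,j,i], ?_, ?_, rfl, ?_⟩
        · simp only [IsPlay, fire, hdiag, e1, e2]; push_cast
          refine ⟨hi, by linarith, by linarith, by linarith, trivial⟩
        · simp only [IsPlay, fire, hdiag, e1, e2]; push_cast
          refine ⟨hj, by linarith, by linarith, by linarith, trivial⟩
        · funext k
          simp only [playResult, fire, hdiag, e1, e2]; push_cast; ring
      · -- (-1,-3), m=6
        refine ⟨[j,i,j,i,j], [i,j,i,j,i], ?_, ?_, rfl, ?_⟩
        · simp only [IsPlay, fire, hdiag, e1, e2]; push_cast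
          refine ⟨hi, by linarith, by linarith, by linarith, by linarith, by linarith, trivial⟩
        · simp only [IsPlay, fire, hdiag, e1, e2]; push_cast
          refine ⟨hj, by linarith, by linarith, by linarith, by linarith, by linarith, trivial⟩
        · funext k
          simp only [playResult, fire, hdiag, e1, e2]; push_cast; ring
      · -- (-3,-1), m=6
        refine ⟨[j,i,j,i,j], [i,j,i,j,i], ?_, ?_, rfl, ?_⟩
        · simp only [IsPlay, fire, hdiag, e1, e2]; push_cast
          refine ⟨hi, by linarith, by linarith, by linarith, by linarith, by linarith, trivial⟩
        · simp only [IsPlay, fire, hdiag, e1, e2]; push_cast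
          refine ⟨hj, by linarith, by linarith, by linarith, by linarith, by linarith, trivial⟩
        · funext k
          simp only [playResult, fire, hdiag, e1, e2]; push_cast; ring
      · exfalso; nlinarith

theorem aux_main {I : Type*} (C : I → I → ℤ) (hdiag : ∀ i, C i i = 2)
    (hoff : ∀ i j, i ≠ j → C i j ≤ 0) (hzero : ∀ i j, C i j = 0 ↔ C j i = 0) :
    ∀ r : ℕ, ∀ (v : I → ℝ) (p : List I), IsPlay C (-1) v p → p.length = r →
      (∀ j, -1 ≤ playResult C v p j) →
      ∀ q : List I, IsPlay C (-1) v q →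
        q.length ≤ r ∧
        ∃ ext : List I, IsPlay C (-1) v (q ++ ext) ∧
          (q ++ ext).length = r ∧
          playResult C v (q ++ ext) = playResult C v p := by
  intro r
  induction r using Nat.strong_induction_on with
  | _ r IH =>
    intro v p hp hlen hend q hq
    match q with
    | [] =>
        refine ⟨Nat.zero_le r, p, hp, by simpa using hlen, rfl⟩
    | i :: q' =>
        obtain ⟨hvi, hq'⟩ := hq
        match p, r with
        | [], _ =>
            exact absurd (hend i) (by simpa [playResult] using not_le.mpr hvi)
        | j :: p', r =>
            obtain ⟨hvj, hp'⟩ := hp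
            have hlen' : p'.length = r - 1 := by simp at hlen; omega
            have hr1 : r - 1 < r := by simp at hlen; omega
            have hend' : ∀ k, -1 ≤ playResult C (fire C j v) p' k := hend
            by_cases hij : i = j
            · subst hij
              obtain ⟨hql, ext, hpl, hle, hres⟩ :=
                IH (r-1) hr1 (fire C i v) p' hp' hlen' hend' q' hq'
              refine ⟨?_, ext, ⟨hvi, hpl⟩, ?_, hres⟩
              · simp; omega
              · simp at hle ⊢; omega
            · rcases polygon C hdiag hoff hzero v i j hij hvi hvj with
                ⟨Li, Lj, hPi, hPj, hll, hrr⟩ | hinf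
              · -- finite polygon
                obtain ⟨_, hLj⟩ := hPj
                obtain ⟨hLjlen, f, hLjf, hLjflen, hLjfres⟩ :=
                  IH (r-1) hr1 (fire C j v) p' hp' hlen' hend' Lj hLj
                -- split the play Lj ++ f
                rw [isPlay_append] at hLjf
                obtain ⟨_, hfplay⟩ := hLjf
                -- z := playResult C v (j::Lj) = playResult C (fire C j v) Lj
                have hz : playResult C (fire C i v) Li = playResult C (fire C j v) Lj := hrr
                -- play Li ++ f from fire C i v
                have hPif : IsPlay C (-1) (fire C i v) (Li ++ f) := by
                  rw [isPlay_append]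
                  exact ⟨hPi.2, by rw [hz]; exact hfplay⟩
                have hresif : playResult C (fire C i v) (Li ++ f) = playResult C (fire C j v) p' := by
                  rw [playResult_append, hz, ← playResult_append, hLjfres]
                have hlenif : (Li ++ f).length = r - 1 := by
                  have h1 : Li.length = Lj.length := by simpa using hll
                  have h2 : (Lj ++ f).length = r - 1 := hLjflen
                  simp at h2 ⊢
                  omega
                have hendif : ∀ k, -1 ≤ playResult C (fire C i v) (Li ++ f) k := by
                  intro k; rw [hresif]; exact hend' k
                obtain ⟨hql, ext, hpl, hle, hres⟩ :=
                  IH (r-1) hr1 (fire C i v) (Li ++ f) hPif hlenif hendif q' hq'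
                refine ⟨?_, ext, ⟨hvi, hpl⟩, ?_, ?_⟩
                · simp; omega
                · simp at hle ⊢; omega
                · show playResult C (fire C i v) (q' ++ ext) = playResult C (fire C j v) p'
                  rw [hres, hresif]
              · -- infinite case: contradiction
                obtain ⟨l, hllen, hlplay⟩ := hinf r
                have := (IH (r-1) hr1 (fire C j v) p' hp' hlen' hend' l hlplay).1
                omega

/-- Lemma on `(<-1)`-plays: if some `(<-1)`-play from `v` of length `r` ends at a
configuration with no coordinate `< -1`, then every `(<-1)`-play from `v` has length
`≤ r` and can be extended to a `(<-1)`-play of length `r` ending at that same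
configuration. -/
theorem lt_neg_one_play_extension
    {I : Type*} [Fintype I] [Nonempty I] (C : I → I → ℤ)
    (hdiag : ∀ i, C i i = 2)
    (hoff : ∀ i j, i ≠ j → C i j ≤ 0)
    (hzero : ∀ i j, C i j = 0 ↔ C j i = 0)
    (v : I → ℝ) (p : List I)
    (hp : IsPlay C (-1) v p)
    (hend : ∀ j, -1 ≤ playResult C v p j) :
    ∀ q : List I, IsPlay C (-1) v q →
      q.length ≤ p.length ∧
      ∃ ext : List I, IsPlay C (-1) v (q ++ ext) ∧
        (q ++ ext).length = p.length ∧
        playResult C v (q ++ ext) = playResult C v p := by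
  intro q hq
  exact aux_main C hdiag hoff hzero p.length v p hp rfl hend q hq
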